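/- Let Ω be a finite set with |Ω| = d ≥ 3, let F = Sym(Ω), let p be a prime, let F(p) ≤ F be a p-Sylow subgroup, and let p^s (s ∈ ℕ, s ≥ 0) be the maximal power of p dividing d. Then F(p)_ω is a p-Sylow subgroup of F_ω for all ω ∈ Ω if and only if either (i) p > d, or (ii) s ≥ 1 and p^{s+1} > d. -/

import Mathlib

/-- `H` is a `p`-Sylow subgroup of `K` (both subgroups of an ambient group `G`):
`H` is a `p`-subgroup of `K` that is maximal among `p`-subgroups of `K`. -/
def IsSylowIn {G : Type*} [Group G] (p : ℕ) (H K : Subgroup G) : Prop :=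
  H ≤ K ∧ IsPGroup p H ∧
    ∀ Q : Subgroup G, Q ≤ K → IsPGroup p Q → H ≤ Q → Q = H

open MulAction Subgroup Equiv Pointwise
open Fin.NatCast

/-- Cardinality characterization of `IsSylowIn` for finite ambient groups. -/
lemma isSylowIn_iff_card {G : Type*} [Group G] [Finite G] {p : ℕ} (hp : p.Prime)
    {H K : Subgroup G} (hHK : H ≤ K) (hH : IsPGroup p H) :
    IsSylowIn p H K ↔ Nat.card H = p ^ (Nat.card K).factorization p := by
  have hfp : Fact p.Prime := ⟨hp⟩
  have hK0 : Nat.card K ≠ 0 := Nat.card_pos.ne'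
  constructor
  · rintro ⟨-, -, hmax⟩
    obtain ⟨P, hP⟩ := (hH.of_equiv (Subgroup.subgroupOfEquivOfLe hHK).symm).exists_le_sylow
    have hmap : (P : Subgroup K).map K.subtype = H := by
      refine hmax _ (Subgroup.map_subtype_le _) (P.isPGroup'.map _) ?_
      calc H = (H.subgroupOf K).map K.subtype := by
              rw [Subgroup.subgroupOf_map_subtype, inf_eq_left.2 hHK]
        _ ≤ (P : Subgroup K).map K.subtype := Subgroup.map_mono hP
    have hcard : Nat.card H = Nat.card (P : Subgroup K) := by
      rw [← hmap]
      exact (Nat.card_congr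
        ((P : Subgroup K).equivMapOfInjective K.subtype K.subtype_injective).toEquiv).symm
    rw [hcard, P.card_eq_multiplicity]
  · intro hcard
    refine ⟨hHK, hH, fun Q hQK hQ hHQ => ?_⟩
    obtain ⟨n, hn⟩ := IsPGroup.iff_card.mp hQ
    have hQdvd : Nat.card Q ∣ Nat.card K := by
      have := Subgroup.card_subgroup_dvd_card (Q.subgroupOf K)
      rwa [Nat.card_congr (Subgroup.subgroupOfEquivOfLe hQK).toEquiv] at this
    have hle : Nat.card Q ≤ Nat.card H := by
      rw [hn] at hQdvd ⊢
      rw [hcard]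
      exact Nat.pow_le_pow_right hp.pos
        ((hp.pow_dvd_iff_le_factorization hK0).mp hQdvd)
    exact (Subgroup.eq_of_le_of_card_ge hHQ hle).symm

/-- Orbit-stabilizer for a subgroup acting on a type. -/
lemma card_orbit_mul_card_inf_stab {G Ω : Type*} [Group G] [Finite G] [MulAction G Ω]
    (H : Subgroup G) (ω : Ω) :
    Nat.card (MulAction.orbit H ω) * Nat.card (H ⊓ MulAction.stabilizer G ω : Subgroup G)
      = Nat.card H := by
  have h1 : Nat.card (MulAction.orbit H ω × MulAction.stabilizer H ω) = Nat.card H :=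
    Nat.card_congr (MulAction.orbitProdStabilizerEquivGroup H ω)
  rw [Nat.card_prod] at h1
  have h2 : MulAction.stabilizer H ω = (H ⊓ MulAction.stabilizer G ω).subgroupOf H := by
    ext g
    simp only [Subgroup.mem_subgroupOf, MulAction.mem_stabilizer_iff, Subgroup.mem_inf,
      SetLike.coe_mem, true_and]
    exact Iff.rfl
  rw [h2, Nat.card_congr (Subgroup.subgroupOfEquivOfLe inf_le_left).toEquiv] at h1
  exact h1

lemma finRotate_pow_apply_succ (n k : ℕ) (i : Fin (n + 1)) :
    ((finRotate (n + 1)) ^ k) i = i + (k : Fin (n + 1)) := by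
  induction k with
  | zero => simp
  | succ k ih =>
    rw [pow_succ', Equiv.Perm.mul_apply, finRotate_succ_apply, ih]
    push_cast
    rw [add_assoc]

lemma finRotate_pow_apply (n : ℕ) [NeZero n] (k : ℕ) (i : Fin n) :
    ((finRotate n) ^ k) i = i + (k : Fin n) := by
  rcases n with - | m
  · exact absurd rfl (NeZero.ne 0)
  · exact finRotate_pow_apply_succ m k i

/-- For `F = Sym(Ω)` with `|Ω| = d ≥ 3`, a `p`-Sylow subgroup `F(p)` of `F`, and `p^s`
the maximal power of `p` dividing `d`: the stabilizer `F(p)_ω` is a `p`-Sylow subgroup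
of `F_ω` for all `ω` iff `p > d`, or `s ≥ 1` and `p^{s+1} > d`. -/
theorem stmt4 {Ω : Type*} [Fintype Ω] (p d s : ℕ) (hp : p.Prime)
    (hd : Fintype.card Ω = d) (hd3 : 3 ≤ d)
    (hs : p ^ s ∣ d ∧ ¬ p ^ (s + 1) ∣ d)
    (Fp : Subgroup (Equiv.Perm Ω)) (hSylow : IsSylowIn p Fp ⊤) :
    (∀ ω : Ω,
        IsSylowIn p (Fp ⊓ MulAction.stabilizer (Equiv.Perm Ω) ω)
          ((⊤ : Subgroup (Equiv.Perm Ω)) ⊓ MulAction.stabilizer (Equiv.Perm Ω) ω)) ↔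
      d < p ∨ (1 ≤ s ∧ d < p ^ (s + 1)) := by
  classical
  have hfp : Fact p.Prime := ⟨hp⟩
  set G := Equiv.Perm Ω with hG
  have hd0 : d ≠ 0 := by omega
  have hcardΩ : Nat.card Ω = d := by rw [Nat.card_eq_fintype_card, hd]
  have hcardG : Nat.card G = d.factorial := by
    rw [Nat.card_eq_fintype_card, Fintype.card_perm, hd]
  -- s is the p-adic valuation of d
  have hsval : d.factorization p = s := by
    have h1 := (hp.pow_dvd_iff_le_factorization hd0).mp hs.1
    have h2 : ¬ (s + 1 ≤ d.factorization p) :=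
      fun h => hs.2 ((hp.pow_dvd_iff_le_factorization hd0).mpr h)
    omega
  -- cardinality of point stabilizers
  have hstab : ∀ ω : Ω, Nat.card (MulAction.stabilizer G ω) = (d - 1).factorial := by
    intro ω
    have h1 : Nat.card (MulAction.orbit G ω × MulAction.stabilizer G ω) = Nat.card G :=
      Nat.card_congr (MulAction.orbitProdStabilizerEquivGroup G ω)
    rw [Nat.card_prod] at h1
    have horb : MulAction.orbit G ω = Set.univ := by
      ext x
      simp only [Set.mem_univ, iff_true]
      exact ⟨Equiv.swap ω x, Equiv.swap_apply_left ω x⟩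
    rw [horb] at h1
    have h2 : Nat.card (Set.univ : Set Ω) = d := by
      rw [Nat.card_congr (Equiv.Set.univ Ω), hcardΩ]
    rw [h2, hcardG, ← Nat.mul_factorial_pred (by omega : d ≠ 0)] at h1
    exact Nat.eq_of_mul_eq_mul_left (by omega) h1
  set N := (d.factorial).factorization p with hN
  set M := ((d - 1).factorial).factorization p with hM
  have hNM : N = s + M := by
    rw [hN, ← Nat.mul_factorial_pred (by omega : d ≠ 0),
      Nat.factorization_mul hd0 (Nat.factorial_ne_zero _)]
    simp [hsval, hM]
  have hcardFp : Nat.card Fp = p ^ N := by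
    have := (isSylowIn_iff_card hp le_top hSylow.2.1).mp hSylow
    rwa [Subgroup.card_top, hcardG] at this
  -- the key pointwise criterion
  have key : ∀ ω : Ω,
      (IsSylowIn p (Fp ⊓ MulAction.stabilizer G ω) (⊤ ⊓ MulAction.stabilizer G ω)) ↔
        Nat.card (MulAction.orbit Fp ω) ∣ p ^ s := by
    intro ω
    rw [top_inf_eq,
      isSylowIn_iff_card hp inf_le_right hSylow.2.1.to_inf_left, hstab ω, ← hM]
    set o := Nat.card (MulAction.orbit Fp ω) with ho
    set c := Nat.card (Fp ⊓ MulAction.stabilizer G ω : Subgroup G) with hc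
    have hmul : o * c = p ^ N := by
      rw [ho, hc, card_orbit_mul_card_inf_stab Fp ω, hcardFp]
    have hodvd : o ∣ p ^ N := ⟨c, hmul.symm⟩
    obtain ⟨t, htN, hto⟩ := (Nat.dvd_prime_pow hp).mp hodvd
    have hcval : c = p ^ (N - t) := by
      have h : p ^ t * c = p ^ t * p ^ (N - t) := by
        rw [← pow_add, Nat.add_sub_cancel' htN, ← hmul, hto]
      exact Nat.eq_of_mul_eq_mul_left (pow_pos hp.pos t) h
    have hcdvd : c ∣ (d - 1).factorial := by
      have h := Subgroup.card_subgroup_dvd_card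
        ((Fp ⊓ MulAction.stabilizer G ω).subgroupOf (MulAction.stabilizer G ω))
      rwa [Nat.card_congr (Subgroup.subgroupOfEquivOfLe inf_le_right).toEquiv, hstab ω] at h
    have hNtM : N - t ≤ M :=
      (hp.pow_dvd_iff_le_factorization (Nat.factorial_ne_zero _)).mp (hcval ▸ hcdvd)
    constructor
    · intro h
      have h1 : N - t = M :=
        Nat.pow_right_injective hp.two_le (show p ^ (N - t) = p ^ M by rw [← hcval, h])
      have h2 : t = s := by omega
      rw [hto, h2]
    · intro h
      have hts : t ≤ s := (Nat.pow_dvd_pow_iff_le_right hp.one_lt).mp (hto ▸ h)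
      have h2 : t = s := by omega
      rw [hcval]
      congr 1
      omega
  constructor
  · -- hard direction: contrapositive
    intro h
    by_contra hcon
    push_neg at hcon
    have hq : p ^ (s + 1) ≤ d := by
      rcases Nat.eq_zero_or_pos s with hs0 | hs1
      · rw [hs0, pow_one]
        exact hcon.1
      · exact hcon.2 hs1
    set q := p ^ (s + 1) with hqdef
    have hq2 : 2 ≤ q := le_trans hp.two_le (Nat.le_self_pow (by omega) p)
    have hqne : NeZero q := ⟨by omega⟩
    obtain ⟨f⟩ : Nonempty (Fin q ↪ Ω) :=
      Function.Embedding.nonempty_of_card_le (by simp [hd]; omega)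
    set c : G := (finRotate q).viaEmbedding f with hcdef
    have hchom : ∀ k : ℕ, c ^ k = ((finRotate q) ^ k).viaEmbedding f := by
      intro k
      rw [hcdef, ← Equiv.Perm.viaEmbeddingHom_apply, ← map_pow,
        Equiv.Perm.viaEmbeddingHom_apply]
    have hck : ∀ k : ℕ, (c ^ k) (f 0) = f ((k : Fin q)) := by
      intro k
      rw [hchom k, Equiv.Perm.viaEmbedding_apply, finRotate_pow_apply, zero_add]
    have hcq : c ^ q = 1 := by
      have h1 : (finRotate q) ^ q = 1 := by
        ext i
        simp [finRotate_pow_apply, Fin.natCast_self]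
      rw [hchom q, h1]
      ext x
      simp [Equiv.Perm.viaEmbedding]
    have hPG : IsPGroup p (Subgroup.zpowers c) := by
      rw [IsPGroup.iff_card]
      have hzc : Nat.card (Subgroup.zpowers c) = orderOf c := Nat.card_zpowers c
      have hdvd : orderOf c ∣ q := orderOf_dvd_of_pow_eq_one hcq
      obtain ⟨t, _, hto⟩ := (Nat.dvd_prime_pow hp).mp hdvd
      exact ⟨t, by rw [hzc, hto]⟩
    obtain ⟨P, hcP⟩ := hPG.exists_le_sylow
    obtain ⟨PP, hPP⟩ : ∃ PP : Sylow p G, (PP : Subgroup G) = Fp := by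
      obtain ⟨P', hP'⟩ := hSylow.2.1.exists_le_sylow
      exact ⟨P', hSylow.2.2 P' le_top P'.isPGroup' hP'⟩
    obtain ⟨g, hg⟩ := MulAction.exists_smul_eq G P PP
    set x : G := g * c * g⁻¹ with hxdef
    have hx : x ∈ Fp := by
      rw [← hPP, ← hg]
      have hmem : c ∈ (P : Subgroup G) := hcP (Subgroup.mem_zpowers c)
      have : ((g • P : Sylow p G) : Subgroup G) = MulAut.conj g • (P : Subgroup G) := by
        rw [Sylow.smul_def, Sylow.pointwise_smul_def]
      rw [this]
      have := Subgroup.smul_mem_pointwise_smul c (MulAut.conj g) (P : Subgroup G) hmem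
      simpa using this
    set ω : Ω := g (f 0) with hωdef
    have hxk : ∀ k : ℕ, (x ^ k) • ω = g (f ((k : Fin q))) := by
      intro k
      have hxpow : x ^ k = g * c ^ k * g⁻¹ := by
        rw [hxdef]
        have := map_pow (MulAut.conj g) c k
        exact conj_pow
      rw [hxpow]
      show g ((c ^ k) (g⁻¹ (g (f 0)))) = g (f ((k : Fin q)))
      rw [Equiv.Perm.inv_def, Equiv.symm_apply_apply, hck k]
    have hbig : q ≤ Nat.card (MulAction.orbit Fp ω) := by
      have hinj : Function.Injective
          (fun k : Fin q => (⟨(x ^ (k : ℕ)) • ω, by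
            refine MulAction.mem_orbit_iff.mpr ?_
            exact ⟨⟨x ^ (k : ℕ), Subgroup.pow_mem Fp hx _⟩, rfl⟩⟩ :
            MulAction.orbit Fp ω)) := by
        intro k l hkl
        have h1 : (x ^ (k : ℕ)) • ω = (x ^ (l : ℕ)) • ω := congrArg Subtype.val hkl
        rw [hxk, hxk, Fin.cast_val_eq_self, Fin.cast_val_eq_self] at h1
        exact f.injective (g.injective h1)
      have := Nat.card_le_card_of_injective _ hinj
      simpa using this
    have hcontra := (key ω).mp (h ω)
    have hle : Nat.card (MulAction.orbit Fp ω) ≤ p ^ s :=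
      Nat.le_of_dvd (pow_pos hp.pos s) hcontra
    have : p ^ s < p ^ (s + 1) := Nat.pow_lt_pow_right hp.one_lt (by omega)
    omega
  · -- easy direction
    intro h ω
    rw [key ω]
    have hdlt : d < p ^ (s + 1) := by
      rcases h with h | h
      · have hs0 : s = 0 := by
          by_contra hs0
          have h1 : p ≤ p ^ s := Nat.le_self_pow hs0 p
          have h2 : p ^ s ≤ d := Nat.le_of_dvd (by omega) hs.1
          omega
        rw [hs0, pow_one]
        exact h
      · exact h.2
    set o := Nat.card (MulAction.orbit Fp ω) with ho
    have hod : o ≤ d := by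
      have h1 : o ≤ Nat.card Ω := Nat.card_le_card_of_injective _ Subtype.val_injective
      omega
    have hodvd : o ∣ p ^ N := by
      have := card_orbit_mul_card_inf_stab Fp ω
      rw [hcardFp] at this
      exact ⟨_, this.symm⟩
    obtain ⟨t, htN, hto⟩ := (Nat.dvd_prime_pow hp).mp hodvd
    have hts : t ≤ s := by
      by_contra hts
      have : p ^ (s + 1) ≤ p ^ t := Nat.pow_le_pow_right hp.pos (by omega)
      omega
    rw [hto]
    exact pow_dvd_pow p hts
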